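/- For H_μ = (1/(1−λr²))·[ (px²+py²+pz²)/2 + k1 r² + k2 x + k3 y + k4 z ] with r² = x²+y²+z², the function K_xx = px² + 2(k1 x² + k2 x) + 2λ x² H_μ satisfies {K_xx, H_μ} = 0. -/

import Mathlib

noncomputable section

/-- Phase space ℝ⁶ with coordinates (x,y,z,px,py,pz). -/
abbrev Pt := Fin 6 → ℝ

/-- Standard basis vector. -/
def e (j : Fin 6) : Pt := Pi.single j 1

/-- Canonical Poisson bracket on ℝ⁶:
{F,G} = Σᵢ (∂F/∂qᵢ ∂G/∂pᵢ − ∂F/∂pᵢ ∂G/∂qᵢ). -/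
def pb (F G : Pt → ℝ) (q : Pt) : ℝ :=
    (fderiv ℝ F q (e 0)) * (fderiv ℝ G q (e 3)) - (fderiv ℝ F q (e 3)) * (fderiv ℝ G q (e 0))
  + (fderiv ℝ F q (e 1)) * (fderiv ℝ G q (e 4)) - (fderiv ℝ F q (e 4)) * (fderiv ℝ G q (e 1))
  + (fderiv ℝ F q (e 2)) * (fderiv ℝ G q (e 5)) - (fderiv ℝ F q (e 5)) * (fderiv ℝ G q (e 2))

/-- H_μ = (1/(1−λr²))·[(px²+py²+pz²)/2 + k1 r² + k2 x + k3 y + k4 z]. -/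
def Hmu (lam k1 k2 k3 k4 : ℝ) (q : Pt) : ℝ :=
  (1 / (1 - lam * (q 0 ^ 2 + q 1 ^ 2 + q 2 ^ 2))) *
    ((q 3 ^ 2 + q 4 ^ 2 + q 5 ^ 2) / 2 + k1 * (q 0 ^ 2 + q 1 ^ 2 + q 2 ^ 2)
      + k2 * q 0 + k3 * q 1 + k4 * q 2)

/-- K_xx = px² + 2(k1 x² + k2 x) + 2λ x² H_μ. -/
def Kxx (lam k1 k2 k3 k4 : ℝ) (q : Pt) : ℝ :=
  q 3 ^ 2 + 2 * (k1 * q 0 ^ 2 + k2 * q 0) + 2 * lam * q 0 ^ 2 * Hmu lam k1 k2 k3 k4 q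

/-- Coordinate projection as a continuous linear map. -/
def P (i : Fin 6) : Pt →L[ℝ] ℝ := ContinuousLinearMap.proj i

set_option maxHeartbeats 1000000 in
theorem stmt1 (lam k1 k2 k3 k4 : ℝ) :
    ∀ q : Pt, 1 - lam * (q 0 ^ 2 + q 1 ^ 2 + q 2 ^ 2) > 0 →
      pb (Kxx lam k1 k2 k3 k4) (Hmu lam k1 k2 k3 k4) q = 0 := by
  intro q hq
  have h0' : (1 - lam * (q 0 ^ 2 + q 1 ^ 2 + q 2 ^ 2)) ≠ 0 := ne_of_gt hq
  have h0 : (1 - lam * (q 0 * q 0 + q 1 * q 1 + q 2 * q 2)) ≠ 0 := by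
    intro h; apply h0'; nlinarith [h]
  have h : ∀ i : Fin 6, HasFDerivAt (fun q : Pt => q i) (P i) q :=
    fun i => (P i).hasFDerivAt
  have hD : HasFDerivAt (fun q : Pt => 1 - lam * (q 0 * q 0 + q 1 * q 1 + q 2 * q 2)) _ q :=
    (hasFDerivAt_const (1:ℝ) q).sub
      ((((h 0).mul (h 0)).add (((h 1).mul (h 1))) |>.add ((h 2).mul (h 2))).const_mul lam)
  have hinv : HasFDerivAt (fun q : Pt => (1 - lam * (q 0 * q 0 + q 1 * q 1 + q 2 * q 2))⁻¹) _ q :=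
    (hasDerivAt_inv h0).comp_hasFDerivAt q hD
  have hN : HasFDerivAt (fun q : Pt =>
      (1/2 : ℝ) * (q 3 * q 3 + q 4 * q 4 + q 5 * q 5)
      + k1 * (q 0 * q 0 + q 1 * q 1 + q 2 * q 2) + k2 * q 0 + k3 * q 1 + k4 * q 2) _ q :=
    (((((((h 3).mul (h 3)).add ((h 4).mul (h 4))).add ((h 5).mul (h 5))).const_mul (1/2 : ℝ)).add
      ((((h 0).mul (h 0)).add (((h 1).mul (h 1))) |>.add ((h 2).mul (h 2))).const_mul k1)).add
      ((h 0).const_mul k2)).add ((h 1).const_mul k3) |>.add ((h 2).const_mul k4)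
  have hH := hinv.fun_mul hN
  have hK := (((h 3).fun_mul (h 3)).fun_add
      (((((h 0).fun_mul (h 0)).const_mul k1).fun_add ((h 0).const_mul k2)).const_mul 2)).fun_add
      ((((h 0).fun_mul (h 0)).const_mul (2 * lam)).fun_mul hH)
  have hfun : Hmu lam k1 k2 k3 k4 = (fun q : Pt =>
      (1 - lam * (q 0 * q 0 + q 1 * q 1 + q 2 * q 2))⁻¹ *
      ((1/2 : ℝ) * (q 3 * q 3 + q 4 * q 4 + q 5 * q 5)
        + k1 * (q 0 * q 0 + q 1 * q 1 + q 2 * q 2) + k2 * q 0 + k3 * q 1 + k4 * q 2)) := by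
    funext q; simp only [Hmu]; ring
  have hkfun : Kxx lam k1 k2 k3 k4 = (fun q : Pt =>
      q 3 * q 3 + 2 * (k1 * (q 0 * q 0) + k2 * q 0) +
      2 * lam * (q 0 * q 0) *
        ((1 - lam * (q 0 * q 0 + q 1 * q 1 + q 2 * q 2))⁻¹ *
        ((1/2 : ℝ) * (q 3 * q 3 + q 4 * q 4 + q 5 * q 5)
          + k1 * (q 0 * q 0 + q 1 * q 1 + q 2 * q 2) + k2 * q 0 + k3 * q 1 + k4 * q 2))) := by
    funext q; simp only [Kxx, Hmu]; ring
  have E0 : fderiv ℝ (Hmu lam k1 k2 k3 k4) q (e 0)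
      = (2*k1*q 0 + k2 + 2*lam*q 0 * Hmu lam k1 k2 k3 k4 q)
        / (1 - lam * (q 0 ^ 2 + q 1 ^ 2 + q 2 ^ 2)) := by
    rw [hfun, hH.fderiv]
    simp (config := { decide := true }) only [ContinuousLinearMap.add_apply,
      ContinuousLinearMap.sub_apply, ContinuousLinearMap.smul_apply,
      ContinuousLinearMap.zero_apply, smul_eq_mul, P,
      ContinuousLinearMap.proj_apply, e, Pi.single_apply, if_true, if_false]
    field_simp
    first
    | ring1
    | tauto
    | (ring_nf; tauto)
  have E1 : fderiv ℝ (Hmu lam k1 k2 k3 k4) q (e 1)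
      = (2*k1*q 1 + k3 + 2*lam*q 1 * Hmu lam k1 k2 k3 k4 q)
        / (1 - lam * (q 0 ^ 2 + q 1 ^ 2 + q 2 ^ 2)) := by
    rw [hfun, hH.fderiv]
    simp (config := { decide := true }) only [ContinuousLinearMap.add_apply,
      ContinuousLinearMap.sub_apply, ContinuousLinearMap.smul_apply,
      ContinuousLinearMap.zero_apply, smul_eq_mul, P,
      ContinuousLinearMap.proj_apply, e, Pi.single_apply, if_true, if_false]
    field_simp
    first
    | ring1
    | tauto
    | (ring_nf; tauto)
  have E2 : fderiv ℝ (Hmu lam k1 k2 k3 k4) q (e 2)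
      = (2*k1*q 2 + k4 + 2*lam*q 2 * Hmu lam k1 k2 k3 k4 q)
        / (1 - lam * (q 0 ^ 2 + q 1 ^ 2 + q 2 ^ 2)) := by
    rw [hfun, hH.fderiv]
    simp (config := { decide := true }) only [ContinuousLinearMap.add_apply,
      ContinuousLinearMap.sub_apply, ContinuousLinearMap.smul_apply,
      ContinuousLinearMap.zero_apply, smul_eq_mul, P,
      ContinuousLinearMap.proj_apply, e, Pi.single_apply, if_true, if_false]
    field_simp
    first
    | ring1
    | tauto
    | (ring_nf; tauto)
  have E3 : fderiv ℝ (Hmu lam k1 k2 k3 k4) q (e 3)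
      = q 3 / (1 - lam * (q 0 ^ 2 + q 1 ^ 2 + q 2 ^ 2)) := by
    rw [hfun, hH.fderiv]
    simp (config := { decide := true }) only [ContinuousLinearMap.add_apply,
      ContinuousLinearMap.sub_apply, ContinuousLinearMap.smul_apply,
      ContinuousLinearMap.zero_apply, smul_eq_mul, P,
      ContinuousLinearMap.proj_apply, e, Pi.single_apply, if_true, if_false]
    field_simp
    first
    | ring1
    | tauto
    | (ring_nf; tauto)
  have E4 : fderiv ℝ (Hmu lam k1 k2 k3 k4) q (e 4)
      = q 4 / (1 - lam * (q 0 ^ 2 + q 1 ^ 2 + q 2 ^ 2)) := by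
    rw [hfun, hH.fderiv]
    simp (config := { decide := true }) only [ContinuousLinearMap.add_apply,
      ContinuousLinearMap.sub_apply, ContinuousLinearMap.smul_apply,
      ContinuousLinearMap.zero_apply, smul_eq_mul, P,
      ContinuousLinearMap.proj_apply, e, Pi.single_apply, if_true, if_false]
    field_simp
    first
    | ring1
    | tauto
    | (ring_nf; tauto)
  have E5 : fderiv ℝ (Hmu lam k1 k2 k3 k4) q (e 5)
      = q 5 / (1 - lam * (q 0 ^ 2 + q 1 ^ 2 + q 2 ^ 2)) := by
    rw [hfun, hH.fderiv]
    simp (config := { decide := true }) only [ContinuousLinearMap.add_apply,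
      ContinuousLinearMap.sub_apply, ContinuousLinearMap.smul_apply,
      ContinuousLinearMap.zero_apply, smul_eq_mul, P,
      ContinuousLinearMap.proj_apply, e, Pi.single_apply, if_true, if_false]
    field_simp
    first
    | ring1
    | tauto
    | (ring_nf; tauto)
  have F0 : fderiv ℝ (Kxx lam k1 k2 k3 k4) q (e 0)
      = 4*k1*q 0 + 2*k2 + 4*lam*q 0 * Hmu lam k1 k2 k3 k4 q
        + 2*lam*q 0^2 * ((2*k1*q 0 + k2 + 2*lam*q 0 * Hmu lam k1 k2 k3 k4 q)
          / (1 - lam * (q 0 ^ 2 + q 1 ^ 2 + q 2 ^ 2))) := by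
    rw [hkfun, hK.fderiv, hfun]
    simp (config := { decide := true }) only [ContinuousLinearMap.add_apply,
      ContinuousLinearMap.sub_apply, ContinuousLinearMap.smul_apply,
      ContinuousLinearMap.zero_apply, smul_eq_mul, P,
      ContinuousLinearMap.proj_apply, e, Pi.single_apply, if_true, if_false]
    field_simp
    first
    | ring1
    | tauto
    | (ring_nf; tauto)
  have F1 : fderiv ℝ (Kxx lam k1 k2 k3 k4) q (e 1)
      = 2*lam*q 0^2 * ((2*k1*q 1 + k3 + 2*lam*q 1 * Hmu lam k1 k2 k3 k4 q)
          / (1 - lam * (q 0 ^ 2 + q 1 ^ 2 + q 2 ^ 2))) := by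
    rw [hkfun, hK.fderiv, hfun]
    simp (config := { decide := true }) only [ContinuousLinearMap.add_apply,
      ContinuousLinearMap.sub_apply, ContinuousLinearMap.smul_apply,
      ContinuousLinearMap.zero_apply, smul_eq_mul, P,
      ContinuousLinearMap.proj_apply, e, Pi.single_apply, if_true, if_false]
    field_simp
    first
    | ring1
    | tauto
    | (ring_nf; tauto)
  have F2 : fderiv ℝ (Kxx lam k1 k2 k3 k4) q (e 2)
      = 2*lam*q 0^2 * ((2*k1*q 2 + k4 + 2*lam*q 2 * Hmu lam k1 k2 k3 k4 q)
          / (1 - lam * (q 0 ^ 2 + q 1 ^ 2 + q 2 ^ 2))) := by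
    rw [hkfun, hK.fderiv, hfun]
    simp (config := { decide := true }) only [ContinuousLinearMap.add_apply,
      ContinuousLinearMap.sub_apply, ContinuousLinearMap.smul_apply,
      ContinuousLinearMap.zero_apply, smul_eq_mul, P,
      ContinuousLinearMap.proj_apply, e, Pi.single_apply, if_true, if_false]
    field_simp
    first
    | ring1
    | tauto
    | (ring_nf; tauto)
  have F3 : fderiv ℝ (Kxx lam k1 k2 k3 k4) q (e 3)
      = 2*q 3 + 2*lam*q 0^2 * (q 3 / (1 - lam * (q 0 ^ 2 + q 1 ^ 2 + q 2 ^ 2))) := by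
    rw [hkfun, hK.fderiv]
    simp (config := { decide := true }) only [ContinuousLinearMap.add_apply,
      ContinuousLinearMap.sub_apply, ContinuousLinearMap.smul_apply,
      ContinuousLinearMap.zero_apply, smul_eq_mul, P,
      ContinuousLinearMap.proj_apply, e, Pi.single_apply, if_true, if_false]
    field_simp
    first
    | ring1
    | tauto
    | (ring_nf; tauto)
  have F4 : fderiv ℝ (Kxx lam k1 k2 k3 k4) q (e 4)
      = 2*lam*q 0^2 * (q 4 / (1 - lam * (q 0 ^ 2 + q 1 ^ 2 + q 2 ^ 2))) := by
    rw [hkfun, hK.fderiv]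
    simp (config := { decide := true }) only [ContinuousLinearMap.add_apply,
      ContinuousLinearMap.sub_apply, ContinuousLinearMap.smul_apply,
      ContinuousLinearMap.zero_apply, smul_eq_mul, P,
      ContinuousLinearMap.proj_apply, e, Pi.single_apply, if_true, if_false]
    field_simp
    first
    | ring1
    | tauto
    | (ring_nf; tauto)
  have F5 : fderiv ℝ (Kxx lam k1 k2 k3 k4) q (e 5)
      = 2*lam*q 0^2 * (q 5 / (1 - lam * (q 0 ^ 2 + q 1 ^ 2 + q 2 ^ 2))) := by
    rw [hkfun, hK.fderiv]
    simp (config := { decide := true }) only [ContinuousLinearMap.add_apply,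
      ContinuousLinearMap.sub_apply, ContinuousLinearMap.smul_apply,
      ContinuousLinearMap.zero_apply, smul_eq_mul, P,
      ContinuousLinearMap.proj_apply, e, Pi.single_apply, if_true, if_false]
    field_simp
    first
    | ring1
    | tauto
    | (ring_nf; tauto)
  rw [pb, E0, E1, E2, E3, E4, E5, F0, F1, F2, F3, F4, F5]
  generalize Hmu lam k1 k2 k3 k4 q = H
  field_simp
  ring
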